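/- For k ≤ n, the ideal in the polynomial ring k[x_1,...,x_n] generated by e_1,...,e_k (elementary symmetric polynomials in all n variables) contains, for each 1 ≤ i ≤ k, a polynomial whose leading monomial in lex order (x_n > ... > x_1) is x_{n-i+1}^i; in particular h_i(x_1,...,x_{n-i+1}) is such a polynomial. -/

import Mathlib

open MvPolynomial Finset

/-- Elementary symmetric polynomial of degree `k` in the first `m` variables `x_1,…,x_m`
(0-indexed: the variables `X i` with `(i : ℕ) < m`), viewed in the polynomial ring in
`n` variables. It is `1` for `k = 0` and `0` for `k > m`. -/
noncomputable def esymb (R : Type) [CommRing R] (n m k : ℕ) : MvPolynomial (Fin n) R :=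
  ∑ S ∈ (Finset.univ.filter (fun i : Fin n => (i : ℕ) < m)).powersetCard k, ∏ i ∈ S, X i

/-- Complete homogeneous symmetric polynomial of degree `k` in the first `m` variables
`x_1,…,x_m` (0-indexed: the variables `X i` with `(i : ℕ) < m`), viewed in the polynomial
ring in `n` variables. It is `1` for `k = 0` and, for `k > 0`, it is `0` when `m = 0`. -/
noncomputable def hsymb (R : Type) [CommRing R] (n m k : ℕ) : MvPolynomial (Fin n) R :=
  ∑ μ ∈ (Finset.univ.filter (fun i : Fin n => (i : ℕ) < m)).sym k,
    ((μ : Multiset (Fin n)).map X).prod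

/-- `d` is the leading monomial (exponent vector) of `p` with respect to the lexicographic
monomial order in which `x_n > x_{n-1} > ⋯ > x_1` (0-indexed: `X ⟨n-1⟩ > ⋯ > X ⟨0⟩`).
We compare exponent vectors in `Lex (Fin n →₀ ℕ)` after reversing the variables via
`Fin.revPerm`, since `Lex` makes the *smallest* index most significant. -/
def IsLexLeadMonom {n : ℕ} {R : Type} [CommRing R] (p : MvPolynomial (Fin n) R)
    (d : Fin n →₀ ℕ) : Prop :=
  d ∈ p.support ∧ ∀ d' ∈ p.support,
    toLex (Finsupp.equivMapDomain Fin.revPerm d') ≤ toLex (Finsupp.equivMapDomain Fin.revPerm d)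


namespace Stmt17
variable (R : Type) [CommRing R] {n : ℕ}

noncomputable def Es (s : Finset (Fin n)) (j : ℕ) : MvPolynomial (Fin n) R :=
  ∑ T ∈ s.powersetCard j, ∏ a ∈ T, X a

noncomputable def Hs (s : Finset (Fin n)) (k : ℕ) : MvPolynomial (Fin n) R :=
  ∑ μ ∈ s.sym k, ((μ : Multiset (Fin n)).map X).prod

noncomputable def Ps (s : Finset (Fin n)) : Polynomial (MvPolynomial (Fin n) R) :=
  ∏ a ∈ s, (1 - Polynomial.C (X a) * Polynomial.X)

noncomputable def HG (s : Finset (Fin n)) (N : ℕ) : Polynomial (MvPolynomial (Fin n) R) :=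
  ∑ k ∈ range (N + 1), Polynomial.C (Hs R s k) * Polynomial.X ^ k

lemma Es_zero (s : Finset (Fin n)) : Es R s 0 = 1 := by
  simp [Es]

lemma Hs_zero (s : Finset (Fin n)) : Hs R s 0 = 1 := by
  simp [Hs, show ((∅ : Sym (Fin n) 0) : Multiset (Fin n)) = 0 from rfl]

lemma Hs_empty (k : ℕ) : Hs R (∅ : Finset (Fin n)) (k + 1) = 0 := by
  simp [Hs]

lemma Es_insert {x : Fin n} {s : Finset (Fin n)} (hx : x ∉ s) (j : ℕ) :
    Es R (insert x s) (j + 1) = Es R s (j + 1) + X x * Es R s j := by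
  unfold Es
  rw [Finset.powersetCard_succ_insert hx, Finset.sum_union, Finset.sum_image, Finset.mul_sum]
  · congr 1
    refine Finset.sum_congr rfl fun T hT => ?_
    rw [Finset.prod_insert fun h => hx ((Finset.mem_powersetCard.mp hT).1 h)]
  · intro T₁ h₁ T₂ h₂ h
    have hx₁ : x ∉ T₁ := fun h' => hx ((Finset.mem_powersetCard.mp h₁).1 h')
    have hx₂ : x ∉ T₂ := fun h' => hx ((Finset.mem_powersetCard.mp h₂).1 h')
    rw [← Finset.erase_insert hx₁, ← Finset.erase_insert hx₂, h]
  · rw [Finset.disjoint_left]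
    intro A hA hA'
    obtain ⟨T, hT, rfl⟩ := Finset.mem_image.mp hA'
    exact hx ((Finset.mem_powersetCard.mp hA).1 (Finset.mem_insert_self x T))

lemma coeff_Ps (s : Finset (Fin n)) (j : ℕ) :
    (Ps R s).coeff j = (-1 : MvPolynomial (Fin n) R) ^ j * Es R s j := by
  classical
  induction s using Finset.induction_on generalizing j with
  | empty =>
    cases j with
    | zero => simp [Ps, Es_zero]
    | succ j =>
      rw [Es, Finset.powersetCard_eq_empty.mpr (by simp)]
      simp [Ps, Polynomial.coeff_one]
  | @insert x s hx ih =>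
    rw [Ps, Finset.prod_insert hx, ← Ps, sub_mul, one_mul]
    cases j with
    | zero =>
      rw [Polynomial.coeff_sub, mul_assoc, Polynomial.coeff_C_mul,
        Polynomial.coeff_X_mul_zero, ih 0, mul_zero, sub_zero]
      simp [Es_zero]
    | succ j =>
      rw [Polynomial.coeff_sub, mul_assoc, Polynomial.coeff_C_mul,
        Polynomial.coeff_X_mul, ih (j + 1), ih j, Es_insert R hx]
      ring


lemma Hs_insert {x : Fin n} {s : Finset (Fin n)} (hx : x ∉ s) (k : ℕ) :
    Hs R (insert x s) (k + 1) = Hs R s (k + 1) + X x * Hs R (insert x s) k := by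
  classical
  rw [Hs, ← Finset.sum_filter_add_sum_filter_not ((insert x s).sym (k + 1)) (fun μ => x ∉ μ)]
  have h1 : ((insert x s).sym (k + 1)).filter (fun μ => x ∉ μ) = s.sym (k + 1) := by
    ext μ
    simp only [Finset.mem_filter, Finset.mem_sym_iff]
    constructor
    · rintro ⟨hall, hxμ⟩ a ha
      rcases Finset.mem_insert.mp (hall a ha) with rfl | h
      · exact absurd ha hxμ
      · exact h
    · intro h
      exact ⟨fun a ha => Finset.mem_insert_of_mem (h a ha), fun hc => hx (h x hc)⟩
  have h2 : ((insert x s).sym (k + 1)).filter (fun μ => ¬ x ∉ μ) =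
      ((insert x s).sym k).image (fun ν => x ::ₛ ν) := by
    ext μ
    simp only [Finset.mem_filter, Finset.mem_image, not_not, Finset.mem_sym_iff]
    constructor
    · rintro ⟨hall, hxμ⟩
      exact ⟨μ.erase x hxμ, fun a ha => hall a (Multiset.mem_of_mem_erase ha),
        Sym.cons_erase hxμ⟩
    · rintro ⟨ν, hν, rfl⟩
      refine ⟨fun a ha => ?_, Sym.mem_cons_self x ν⟩
      rcases Sym.mem_cons.mp ha with rfl | h
      · exact Finset.mem_insert_self a s
      · exact hν a h
  rw [h1, h2, Finset.sum_image (by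
    intro ν₁ _ ν₂ _ h
    apply Sym.coe_injective
    apply (Multiset.cons_inj_right x).mp
    have := congrArg (fun μ : Sym (Fin n) (k+1) => (μ : Multiset (Fin n))) h
    simpa [Sym.coe_cons] using this)]
  congr 1
  rw [Hs, Finset.mul_sum]
  refine Finset.sum_congr rfl fun ν _ => ?_
  rw [Sym.coe_cons, Multiset.map_cons, Multiset.prod_cons]

lemma coeff_HG (s : Finset (Fin n)) (N j : ℕ) :
    (HG R s N).coeff j = if j ≤ N then Hs R s j else 0 := by
  rw [HG, Polynomial.finset_sum_coeff]
  simp_rw [Polynomial.coeff_C_mul, Polynomial.coeff_X_pow]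
  by_cases h : j ≤ N
  · rw [Finset.sum_eq_single_of_mem j (Finset.mem_range.mpr (by omega))]
    · simp [h]
    · intro k _ hk
      simp [Ne.symm hk]
  · rw [if_neg h, Finset.sum_eq_zero]
    intro k hk
    have : j ≠ k := by have := Finset.mem_range.mp hk; omega
    simp [this]

lemma key1 (s : Finset (Fin n)) (N : ℕ) :
    ∀ j ≤ N, (Ps R s * HG R s N).coeff j = if j = 0 then 1 else 0 := by
  classical
  induction s using Finset.induction_on with
  | empty =>
    intro j hj
    rw [Ps, Finset.prod_empty, one_mul, coeff_HG, if_pos hj]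
    cases j with
    | zero => simp [Hs_zero]
    | succ j => simp [Hs_empty]
  | @insert x s hx ih =>
    intro j hj
    have hstep : (1 - Polynomial.C (X x) * Polynomial.X) * HG R (insert x s) N =
        HG R s N - Polynomial.C (X x * Hs R (insert x s) N) * Polynomial.X ^ (N + 1) := by
      apply Polynomial.ext
      intro m
      rw [sub_mul, one_mul, Polynomial.coeff_sub, Polynomial.coeff_sub, mul_assoc,
        Polynomial.coeff_C_mul, Polynomial.coeff_C_mul, Polynomial.coeff_X_pow]
      cases m with
      | zero =>
        rw [Polynomial.coeff_X_mul_zero, coeff_HG, coeff_HG]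
        simp [Hs_zero]
      | succ m =>
        rw [Polynomial.coeff_X_mul, coeff_HG, coeff_HG, coeff_HG]
        rcases lt_trichotomy m N with hm | rfl | hm
        · rw [if_pos (show m + 1 ≤ N by omega), if_pos (show m + 1 ≤ N by omega),
            if_pos (show m ≤ N by omega),
            if_neg (show ¬ m + 1 = N + 1 by omega), Hs_insert R hx]
          ring1
        · rw [if_neg (show ¬ m + 1 ≤ m by omega), if_neg (show ¬ m + 1 ≤ m by omega),
            if_pos (le_refl m), if_pos rfl]
          ring1
        · rw [if_neg (show ¬ m + 1 ≤ N by omega), if_neg (show ¬ m + 1 ≤ N by omega),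
            if_neg (show ¬ m ≤ N by omega),
            if_neg (show ¬ m + 1 = N + 1 by omega)]
          ring1
    rw [Ps, Finset.prod_insert hx, ← Ps, mul_comm (1 - Polynomial.C (X x) * Polynomial.X),
      mul_assoc, hstep, mul_sub, Polynomial.coeff_sub, ih j hj, ← mul_assoc,
      Polynomial.coeff_mul_X_pow']
    rw [if_neg (show ¬ (N + 1 ≤ j) by omega), sub_zero]


lemma natDegree_Ps_le (s : Finset (Fin n)) : (Ps R s).natDegree ≤ s.card := by
  refine le_trans (Polynomial.natDegree_prod_le _ _) ?_
  calc ∑ a ∈ s, ((1 : Polynomial (MvPolynomial (Fin n) R))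
        - Polynomial.C (X a) * Polynomial.X).natDegree
      ≤ ∑ _a ∈ s, 1 := by
        refine Finset.sum_le_sum fun a _ => ?_
        refine le_trans (Polynomial.natDegree_sub_le _ _) (max_le (by simp) ?_)
        refine le_trans (Polynomial.natDegree_mul_le) ?_
        simp only [Polynomial.natDegree_C, zero_add]
        exact Polynomial.natDegree_X_le
    _ = s.card := by simp

lemma card_filter_lt (m : ℕ) (h : m ≤ n) :
    (Finset.univ.filter (fun a : Fin n => (a : ℕ) < m)).card = m := by
  have : Finset.univ.filter (fun a : Fin n => (a : ℕ) < m) =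
      Finset.map (Fin.castLEEmb h) Finset.univ := by
    ext a
    simp only [Finset.mem_filter, Finset.mem_univ, true_and, Finset.mem_map]
    constructor
    · intro ha
      exact ⟨⟨(a : ℕ), ha⟩, by ext; simp [Fin.castLEEmb]⟩
    · rintro ⟨b, rfl⟩
      simpa [Fin.castLEEmb] using b.isLt
  rw [this, Finset.card_map, Finset.card_univ, Fintype.card_fin]

lemma main_id (m i : ℕ) (hmn : m ≤ n) (hcard : n - m < i) :
    ∑ j ∈ range (i + 1), (-1 : MvPolynomial (Fin n) R) ^ j *
      Es R (Finset.univ : Finset (Fin n)) j *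
      Hs R (Finset.univ.filter (fun a : Fin n => (a : ℕ) < m)) (i - j) = 0 := by
  classical
  set s := Finset.univ.filter (fun a : Fin n => (a : ℕ) < m) with hs
  have h2 : (Ps R (Finset.univ : Finset (Fin n)) * HG R s i).coeff i = 0 := by
    have hsplit : Ps R (Finset.univ : Finset (Fin n)) = Ps R s * Ps R sᶜ := by
      rw [Ps, Ps, Ps, Finset.prod_mul_prod_compl]
    rw [hsplit, mul_comm (Ps R s) (Ps R sᶜ), mul_assoc, Polynomial.coeff_mul,
      Finset.Nat.sum_antidiagonal_eq_sum_range_succ_mk]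
    rw [Finset.sum_eq_single_of_mem i (Finset.mem_range.mpr (by omega))]
    · rw [key1 R s i (i - i) (by omega), if_pos (by omega), mul_one]
      apply Polynomial.coeff_eq_zero_of_natDegree_lt
      refine lt_of_le_of_lt (natDegree_Ps_le R _) ?_
      have h1 : sᶜ.card = n - s.card := by
        rw [Finset.card_compl]
        simp
      rw [h1, card_filter_lt m hmn]
      omega
    · intro k hk hki
      have hk' := Finset.mem_range.mp hk
      rw [key1 R s i (i - k) (by omega), if_neg (by omega), mul_zero]
  rw [Polynomial.coeff_mul, Finset.Nat.sum_antidiagonal_eq_sum_range_succ_mk] at h2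
  rw [← h2]
  refine Finset.sum_congr rfl fun j hj => ?_
  rw [coeff_Ps, coeff_HG, if_pos (by omega), mul_assoc]


lemma prod_map_X (μ : Multiset (Fin n)) :
    (μ.map (X : Fin n → MvPolynomial (Fin n) R)).prod = monomial μ.toFinsupp 1 := by
  induction μ using Multiset.induction_on with
  | empty => simp
  | cons a μ ih =>
    rw [Multiset.map_cons, Multiset.prod_cons, ih, ← Multiset.singleton_add,
      Multiset.toFinsupp_add, Multiset.toFinsupp_singleton,
      show (X a : MvPolynomial (Fin n) R) = monomial (Finsupp.single a 1) 1 from rfl,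
      monomial_mul, one_mul]

lemma coeff_Hs (s : Finset (Fin n)) (k : ℕ) (d : Fin n →₀ ℕ) :
    coeff d (Hs R s k) =
      ∑ μ ∈ s.sym k, if ((μ : Multiset (Fin n)).toFinsupp = d) then (1 : R) else 0 := by
  rw [Hs, MvPolynomial.coeff_sum]
  refine Finset.sum_congr rfl fun μ _ => ?_
  rw [prod_map_X, MvPolynomial.coeff_monomial]

lemma support_Hs_exists {s : Finset (Fin n)} {k : ℕ} {d : Fin n →₀ ℕ}
    (hd : d ∈ (Hs R s k).support) :
    ∃ μ ∈ s.sym k, ((μ : Multiset (Fin n)).toFinsupp = d) := by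
  by_contra h
  push_neg at h
  apply MvPolynomial.mem_support_iff.mp hd
  rw [coeff_Hs, Finset.sum_eq_zero]
  intro μ hμ
  rw [if_neg (h μ hμ)]

lemma toFinsupp_replicate (q : Fin n) (k : ℕ) :
    (Multiset.replicate k q).toFinsupp = Finsupp.single q k := by
  ext b
  rw [Multiset.toFinsupp_apply, Multiset.count_replicate, Finsupp.single_apply]

lemma single_mem_support [Nontrivial R] (s : Finset (Fin n)) (k : ℕ) {q : Fin n}
    (hq : q ∈ s) : Finsupp.single q k ∈ (Hs R s k).support := by
  rw [MvPolynomial.mem_support_iff, coeff_Hs,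
    Finset.sum_eq_single_of_mem (Sym.replicate k q) (s.replicate_mem_sym hq k)]
  · rw [if_pos]
    · exact one_ne_zero
    · rw [Sym.coe_replicate, toFinsupp_replicate]
  · intro μ _ hμ
    rw [if_neg]
    intro h
    apply hμ
    have hco : (μ : Multiset (Fin n)) = Multiset.replicate k q := by
      have h2 := congrArg Finsupp.toMultiset h
      rw [Multiset.toFinsupp_toMultiset, ← toFinsupp_replicate,
        Multiset.toFinsupp_toMultiset] at h2
      exact h2
    exact Sym.coe_injective (by rw [hco, ← Sym.coe_replicate])

lemma support_Hs_facts {s : Finset (Fin n)} {k : ℕ} {d : Fin n →₀ ℕ}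
    (hd : d ∈ (Hs R s k).support) :
    (∀ a : Fin n, d a ≠ 0 → a ∈ s) ∧ ∑ a : Fin n, d a = k := by
  obtain ⟨μ, hμ, rfl⟩ := support_Hs_exists R hd
  constructor
  · intro a ha
    rw [Multiset.toFinsupp_apply] at ha
    exact Finset.mem_sym_iff.mp hμ a (Multiset.count_pos.mp (Nat.pos_of_ne_zero ha))
  · have hcard : Multiset.card (μ : Multiset (Fin n)) = k := μ.2
    calc ∑ a : Fin n, ((μ : Multiset (Fin n)).toFinsupp) a
        = ∑ a ∈ (μ : Multiset (Fin n)).toFinset, ((μ : Multiset (Fin n)).toFinsupp) a := by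
          refine (Finset.sum_subset (Finset.subset_univ _) ?_).symm
          intro a _ ha
          rw [Multiset.toFinsupp_apply,
            Multiset.count_eq_zero_of_notMem (fun h => ha (Multiset.mem_toFinset.mpr h))]
      _ = k := by
          simp_rw [Multiset.toFinsupp_apply]
          rw [Multiset.toFinset_sum_count_eq, hcard]

end Stmt17


open Stmt17

/-- For 1 ≤ i ≤ k ≤ n, the ideal ⟨e_1(x_1,…,x_n),…,e_k(x_1,…,x_n)⟩ contains a polynomial
whose lex (x_n > ⋯ > x_1) leading monomial is x_{n-i+1}^i; in particular
h_i(x_1,…,x_{n-i+1}) is such a polynomial. -/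
theorem stmt17 (R : Type) [CommRing R] [Nontrivial R] (n k i : ℕ)
    (hi : 1 ≤ i) (hik : i ≤ k) (hkn : k ≤ n) :
    hsymb R n (n + 1 - i) i ∈ Ideal.span ((fun j => esymb R n n j) '' Set.Icc 1 k) ∧
    IsLexLeadMonom (hsymb R n (n + 1 - i) i)
      (Finsupp.single (⟨n - i, by omega⟩ : Fin n) i) := by
  classical
  have hin : i ≤ n := hik.trans hkn
  set m := n + 1 - i with hmdef
  set s : Finset (Fin n) := Finset.univ.filter (fun a : Fin n => (a : ℕ) < m) with hsdef
  have hhs : hsymb R n m i = Hs R s i := rfl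
  have hes : ∀ j, esymb R n n j = Es R (Finset.univ : Finset (Fin n)) j := by
    intro j
    rw [esymb, Es, Finset.filter_true_of_mem fun a _ => a.isLt]
  constructor
  · have hm1 : m ≤ n := by omega
    have hm2 : n - m < i := by omega
    have hid := main_id R m i hm1 hm2
    rw [Finset.sum_range_succ'] at hid
    simp only [pow_zero, one_mul, Nat.sub_zero, Es_zero] at hid
    have hkey : Hs R s i =
        -∑ j ∈ range i, (-1 : MvPolynomial (Fin n) R) ^ (j + 1) *
          Es R (Finset.univ : Finset (Fin n)) (j + 1) * Hs R s (i - (j + 1)) := by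
      linear_combination hid
    rw [hhs, hkey]
    refine neg_mem (Ideal.sum_mem _ fun j hj => ?_)
    have hj' := Finset.mem_range.mp hj
    have hjk : (j + 1) ∈ Set.Icc 1 k := Set.mem_Icc.mpr ⟨by omega, by omega⟩
    have hE : Es R (Finset.univ : Finset (Fin n)) (j + 1) ∈
        Ideal.span ((fun j => esymb R n n j) '' Set.Icc 1 k) :=
      Ideal.subset_span ⟨j + 1, hjk, hes (j + 1)⟩
    exact Ideal.mul_mem_right _ _ (Ideal.mul_mem_left _ _ hE)
  · set q : Fin n := ⟨n - i, by omega⟩ with hq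
    have hqs : q ∈ s := by
      rw [hsdef, Finset.mem_filter]
      refine ⟨Finset.mem_univ _, ?_⟩
      show (n - i) < m
      omega
    refine ⟨single_mem_support R s i hqs, ?_⟩
    intro d' hd'
    obtain ⟨hsupp, hsum⟩ := support_Hs_facts R (hd' : d' ∈ (Hs R s i).support)
    have hsupp' : ∀ a : Fin n, d' a ≠ 0 → (a : ℕ) < m := by
      intro a ha
      exact (Finset.mem_filter.mp (hsupp a ha)).2
    by_cases heq : d' = Finsupp.single q i
    · rw [heq]
    · apply le_of_lt
      rw [Finsupp.Lex.lt_iff]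
      have hqrev : ((q.rev : Fin n) : ℕ) = i - 1 := by
        rw [Fin.val_rev]
        show n - ((n - i) + 1) = i - 1
        omega
      refine ⟨q.rev, ?_, ?_⟩
      · intro j hj
        have hjv : (j : ℕ) < i - 1 := by
          rw [Fin.lt_def, hqrev] at hj
          exact hj
        show (Finsupp.equivMapDomain Fin.revPerm d') j =
          (Finsupp.equivMapDomain Fin.revPerm (Finsupp.single q i)) j
        rw [Finsupp.equivMapDomain_single, Fin.revPerm_apply,
          Finsupp.single_eq_of_ne (by
            intro hcon
            rw [hcon, hqrev] at hjv
            omega),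
          Finsupp.equivMapDomain_apply, Fin.revPerm_symm, Fin.revPerm_apply]
        by_contra hne
        have hlt := hsupp' _ hne
        rw [Fin.val_rev] at hlt
        omega
      · show (Finsupp.equivMapDomain Fin.revPerm d') q.rev <
          (Finsupp.equivMapDomain Fin.revPerm (Finsupp.single q i)) q.rev
        rw [Finsupp.equivMapDomain_single, Fin.revPerm_apply, Finsupp.single_eq_same,
          Finsupp.equivMapDomain_apply, Fin.revPerm_symm, Fin.revPerm_apply, Fin.rev_rev]
        by_contra hge
        push_neg at hge
        have hle : d' q ≤ ∑ a : Fin n, d' a :=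
          Finset.single_le_sum (fun a _ => Nat.zero_le _) (Finset.mem_univ q)
        have hdq : d' q = i := by omega
        apply heq
        ext a
        by_cases ha : a = q
        · rw [ha, hdq, Finsupp.single_eq_same]
        · rw [Finsupp.single_eq_of_ne ha]
          have herase : ∑ b ∈ (Finset.univ : Finset (Fin n)).erase q, d' b = 0 := by
            have h3 := Finset.add_sum_erase (Finset.univ : Finset (Fin n)) d'
              (Finset.mem_univ q)
            omega
          exact (Finset.sum_eq_zero_iff).mp herase a
            (Finset.mem_erase.mpr ⟨ha, Finset.mem_univ a⟩)
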